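/- If n ≥ B^d where B ≥ 2 and d ≥ 1 are coprime integers, then some base-B subword of n is divisible by d. That is, writing n = Σ_{k=0}^{m} x_k B^k with x_m ≠ 0 and defining W(i,j) = Σ_{k=i}^{j} x_k B^{k-i}, there exist 0 ≤ i ≤ j ≤ m with d ∣ W(i,j). -/

import Mathlib

/-- The base-`B` subword of `n` from digit position `i` to `j`. -/
def subword (B n i j : ℕ) : ℕ :=
  ∑ k ∈ Finset.Icc i j, (Nat.digits B n).getD k 0 * B ^ (k - i)

theorem subword_divisible (B d n : ℕ) (hB : 2 ≤ B) (hd : 1 ≤ d)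
    (hcop : Nat.Coprime B d) (hn : B ^ d ≤ n) :
    ∃ i j : ℕ, i ≤ j ∧ j < (Nat.digits B n).length ∧ d ∣ subword B n i j := by
  have hB1 : 1 < B := hB
  have hn0 : n ≠ 0 := by
    have : 0 < B ^ d := pow_pos (by omega) d
    omega
  set g : ℕ → ℕ := fun k => (Nat.digits B n).getD k 0 with hg
  set S : ℕ → ℕ := fun j => ∑ k ∈ Finset.range (j + 1), g k * B ^ k with hS
  -- pigeonhole on S j % d for j ∈ range (d+1)
  have hmaps : ∀ j ∈ Finset.range (d + 1), S j % d ∈ Finset.range d := by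
    intro j _
    exact Finset.mem_range.mpr (Nat.mod_lt _ (by omega))
  obtain ⟨a, ha, b, hb, hab, heq⟩ :=
    Finset.exists_ne_map_eq_of_card_lt_of_maps_to
      (by simp) hmaps
  -- wlog a < b
  wlog hlt : a < b generalizing a b
  · exact this b hb a ha hab.symm heq.symm (by omega)
  have hbd : b ≤ d := by simpa using Nat.lt_succ_iff.mp (Finset.mem_range.mp hb)
  -- S b = S a + tail sum
  have hsplit : S a + ∑ k ∈ Finset.Icc (a + 1) b, g k * B ^ k = S b := by
    have h1 : Finset.Icc (a + 1) b = Finset.Ico (a + 1) (b + 1) := by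
      rw [Finset.Ico_add_one_right_eq_Icc]
    rw [hS]
    simp only [h1, ← Finset.range_eq_Ico]
    rw [show Finset.range (a + 1) = Finset.Ico 0 (a + 1) by rw [Finset.range_eq_Ico],
      show Finset.range (b + 1) = Finset.Ico 0 (b + 1) by rw [Finset.range_eq_Ico]]
    exact Finset.sum_Ico_consecutive _ (by omega) (by omega)
  have hdvdtail : d ∣ ∑ k ∈ Finset.Icc (a + 1) b, g k * B ^ k := by
    have hle : S a ≤ S b := by omega
    have hmod : S a ≡ S b [MOD d] := heq
    have := (Nat.modEq_iff_dvd' hle).mp hmod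
    have heq2 : S b - S a = ∑ k ∈ Finset.Icc (a + 1) b, g k * B ^ k := by omega
    rwa [heq2] at this
  -- rewrite tail sum as B^(a+1) * subword
  have hfac : ∑ k ∈ Finset.Icc (a + 1) b, g k * B ^ k
      = B ^ (a + 1) * subword B n (a + 1) b := by
    rw [subword, Finset.mul_sum]
    apply Finset.sum_congr rfl
    intro k hk
    have : a + 1 ≤ k := (Finset.mem_Icc.mp hk).1
    rw [mul_comm (B ^ (a + 1)), mul_assoc, ← pow_add, Nat.sub_add_cancel this]
  have hdvd : d ∣ subword B n (a + 1) b := by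
    rw [hfac] at hdvdtail
    exact (Nat.Coprime.pow_left _ hcop).symm.dvd_of_dvd_mul_left hdvdtail
  refine ⟨a + 1, b, by omega, ?_, hdvd⟩
  rw [Nat.digits_len B n hB1 hn0]
  have : d ≤ Nat.log B n := (Nat.le_log_iff_pow_le hB1 hn0).mpr hn
  omega
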